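/- arXiv:0709.4106 — 5 statements merged into one kernel-verified Lean document; each statement's English description precedes it below -/
import Mathlib

section
/- Let N ≥ 1 be an integer, let 0 < a < b and let t > 0. Then the supremum of σ^{−N/2} e^{−ρ²/(4σ)} over all pairs (ρ,σ) with ρ ≥ 0, 0 < σ ≤ t and at ≤ ρ² + σ ≤ bt is attained, and it equals e^{1/4} t^{−N/2} e^{−a/4} if a/(2N) > 1, and equals e^{1/4} (2N/(at))^{N/2} e^{−N/2} if a/(2N) ≤ 1. -/
open Real

lemma key_ineq (p x y : ℝ) (hp : 0 ≤ p) (hx : 0 < x) (hy : 0 < y)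
    (h : p * (x - y) ≤ y * (x - y)) :
    p * Real.log x - x ≤ p * Real.log y - y := by
  have hlog : Real.log x - Real.log y ≤ x / y - 1 := by
    rw [← Real.log_div hx.ne' hy.ne']
    exact Real.log_le_sub_one_of_pos (div_pos hx hy)
  have h1 : p * (Real.log x - Real.log y) ≤ p * (x / y - 1) :=
    mul_le_mul_of_nonneg_left hlog hp
  have h2 : p * (x / y - 1) ≤ x - y := by
    rw [div_sub_one hy.ne', ← mul_div_assoc, div_le_iff₀ hy]
    nlinarith
  rw [mul_sub] at h1
  linarith

/-- the supremum of `σ^{-N/2} e^{-ρ²/(4σ)}` over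
`{(ρ,σ) : ρ ≥ 0, 0 < σ ≤ t, at ≤ ρ² + σ ≤ bt}` is attained and equals
`e^{1/4} t^{-N/2} e^{-a/4}` if `a/(2N) > 1`, and
`e^{1/4} (2N/(at))^{N/2} e^{-N/2}` if `a/(2N) ≤ 1`. -/
theorem stmt_4 (N : ℕ) (hN : 1 ≤ N) (a b t : ℝ) (ha : 0 < a) (hab : a < b) (ht : 0 < t) :
    IsGreatest
      {v : ℝ | ∃ ρ σ : ℝ, 0 ≤ ρ ∧ 0 < σ ∧ σ ≤ t ∧
        a * t ≤ ρ ^ 2 + σ ∧ ρ ^ 2 + σ ≤ b * t ∧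
        v = σ ^ (-(N : ℝ) / 2) * Real.exp (-ρ ^ 2 / (4 * σ))}
      (if 1 < a / (2 * N) then
        Real.exp (1 / 4) * t ^ (-(N : ℝ) / 2) * Real.exp (-a / 4)
      else
        Real.exp (1 / 4) * (2 * N / (a * t)) ^ ((N : ℝ) / 2) * Real.exp (-(N : ℝ) / 2)) := by
  have hN1 : (1:ℝ) ≤ (N:ℝ) := by exact_mod_cast hN
  have hNpos : (0:ℝ) < (N:ℝ) := by linarith
  constructor
  · -- membership
    by_cases hcase : 1 < a / (2 * (N:ℝ))
    · rw [if_pos hcase]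
      have ha2N : 2 * (N:ℝ) < a := by
        rw [lt_div_iff₀ (by positivity)] at hcase; linarith
      have h0 : (0:ℝ) ≤ a * t - t := by nlinarith
      refine ⟨Real.sqrt (a*t - t), t, Real.sqrt_nonneg _, ht, le_refl t, ?_, ?_, ?_⟩
      · rw [Real.sq_sqrt h0]; linarith
      · rw [Real.sq_sqrt h0]; nlinarith
      · rw [Real.sq_sqrt h0]
        have he : Real.exp (1/4) * Real.exp (-a/4) = Real.exp (-(a*t - t)/(4*t)) := by
          rw [← Real.exp_add]; congr 1; field_simp; ring
        rw [← he]; ring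
    · rw [if_neg hcase]
      push_neg at hcase
      have ha2N : a ≤ 2 * (N:ℝ) := by
        rw [div_le_one (by positivity)] at hcase; linarith
      have hσ0 : (0:ℝ) < a * t / (2 * (N:ℝ)) := by positivity
      have hσ0t : a * t / (2 * (N:ℝ)) ≤ t := by
        rw [div_le_iff₀ (by positivity)]; nlinarith
      have h0 : (0:ℝ) ≤ a * t - a * t / (2 * (N:ℝ)) := by
        have : a * t / (2 * (N:ℝ)) ≤ a * t := by
          rw [div_le_iff₀ (by positivity)]; nlinarith [mul_pos ha ht]
        linarith
      refine ⟨Real.sqrt (a*t - a*t/(2*(N:ℝ))), a*t/(2*(N:ℝ)), Real.sqrt_nonneg _, hσ0,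
        hσ0t, ?_, ?_, ?_⟩
      · rw [Real.sq_sqrt h0]; linarith
      · rw [Real.sq_sqrt h0]; nlinarith
      · rw [Real.sq_sqrt h0]
        have e1 : (2*(N:ℝ)/(a*t)) ^ ((N:ℝ)/2) = (a*t/(2*(N:ℝ))) ^ (-(N:ℝ)/2) := by
          rw [neg_div, Real.rpow_neg hσ0.le, ← Real.inv_rpow hσ0.le, inv_div]
        have he : Real.exp (1/4) * Real.exp (-(N:ℝ)/2)
            = Real.exp (-(a*t - a*t/(2*(N:ℝ)))/(4*(a*t/(2*(N:ℝ))))) := by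
          rw [← Real.exp_add]; congr 1
          field_simp
          ring
        rw [e1, ← he]; ring
  · -- upper bound
    rintro v ⟨ρ, σ, hρ, hσ, hσt, h1, h2, rfl⟩
    set x : ℝ := a*t/(4*σ) with hx_def
    have hx : 0 < x := by positivity
    have hi : -ρ^2/(4*σ) ≤ 1/4 - x := by
      have h4σ : (0:ℝ) < 4*σ := by positivity
      have h3 : (a*t - σ)/(4*σ) ≤ ρ^2/(4*σ) := by
        apply div_le_div_of_nonneg_right ?_ h4σ.le
        linarith
      have heq : x - 1/4 = (a*t - σ)/(4*σ) := by
        rw [hx_def]; field_simp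
      rw [neg_div]
      linarith
    have hat4 : (0:ℝ) < a*t/4 := by positivity
    have e2 : (N:ℝ)/2 * Real.log x = (N:ℝ)/2 * Real.log (a*t/4) - (N:ℝ)/2 * Real.log σ := by
      rw [hx_def, show a*t/(4*σ) = (a*t/4)/σ by ring, Real.log_div hat4.ne' hσ.ne']
      ring
    rw [Real.rpow_def_of_pos hσ, ← Real.exp_add]
    by_cases hcase : 1 < a / (2 * (N:ℝ))
    · rw [if_pos hcase]
      have ha2N : 2 * (N:ℝ) < a := by
        rw [lt_div_iff₀ (by positivity)] at hcase; linarith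
      have hxy : a/4 ≤ x := by
        rw [hx_def, div_le_div_iff₀ (by norm_num) (by positivity)]
        nlinarith
      have hk := key_ineq ((N:ℝ)/2) x (a/4) (by positivity) hx (by positivity)
        (mul_le_mul_of_nonneg_right (by linarith) (by linarith))
      have e3 : (N:ℝ)/2 * Real.log (a/4)
          = (N:ℝ)/2 * Real.log (a*t/4) - (N:ℝ)/2 * Real.log t := by
        rw [show a*t/4 = (a/4)*t by ring, Real.log_mul (by positivity) ht.ne']
        ring
      rw [Real.rpow_def_of_pos ht, ← Real.exp_add, ← Real.exp_add, Real.exp_le_exp]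
      linarith [hk, hi, e2, e3]
    · rw [if_neg hcase]
      have hk := key_ineq ((N:ℝ)/2) x ((N:ℝ)/2) (by positivity) hx (by positivity)
        (le_refl _)
      have e4 : (N:ℝ)/2 * Real.log (2*(N:ℝ)/(a*t))
          = (N:ℝ)/2 * Real.log ((N:ℝ)/2) - (N:ℝ)/2 * Real.log (a*t/4) := by
        rw [show 2*(N:ℝ)/(a*t) = ((N:ℝ)/2)/(a*t/4) by
          field_simp; ring, Real.log_div (by positivity) hat4.ne']
        ring
      rw [Real.rpow_def_of_pos (by positivity), ← Real.exp_add, ← Real.exp_add,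
        Real.exp_le_exp]
      linarith [hk, hi, e2, e4]
end

section
/- Let a > 0, b ∈ ℝ and κ > 0. Then there exists a constant C = C(a,b,κ) > 0 such that for all A > 0 and all B > κ/A, one has ∫_0^1 (1−x)^{−a} x^{−b} e^{−A²/(4(1−x))} e^{−B²/(4x)} dx ≤ C e^{−(A+B)²/4} A^{1−a} B^{1−b} (A+B)^{a+b−2}. -/
open MeasureTheory Real

private lemma ratio_aux1 (κ p t : ℝ) (hκ : 0 < κ) (ht : 1 ≤ t) :
    p * Real.log t ≤ 16*p^2/κ + κ*(t + 1/t - 2)/16 := by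
  have ht0 : (0:ℝ) < t := by linarith
  set s := Real.sqrt t with hs
  have hs1 : 1 ≤ s := Real.one_le_sqrt.2 ht
  have hs0 : 0 < s := by linarith
  have hst : s^2 = t := Real.sq_sqrt ht0.le
  have hlog2 : Real.log t = 2 * Real.log s := by
    rw [hs, Real.log_sqrt ht0.le]; ring
  have hinv : 1/s ≤ 1 := by rw [div_le_one hs0]; exact hs1
  have hlog : Real.log t ≤ 2*(s - 1/s) := by
    have h1 : Real.log s ≤ s - 1 := Real.log_le_sub_one_of_pos hs0
    rw [hlog2]; linarith
  have hlognn : 0 ≤ Real.log t := Real.log_nonneg ht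
  set u := s - 1/s with hu
  have hunn : 0 ≤ u := by rw [hu]; linarith
  have huv : u^2 = t + 1/t - 2 := by
    rw [hu, ← hst]; field_simp; ring
  have key0 : 2 * |p| * u * κ ≤ 16 * |p| ^ 2 + κ ^ 2 * u ^ 2 / 16 := by
    nlinarith [sq_nonneg (κ * u / 4 - 4 * |p|)]
  rw [sq_abs] at key0
  have key : 2 * |p| * u ≤ 16*p^2/κ + κ*u^2/16 := by
    rw [← sub_nonneg]
    have heq : 16*p^2/κ + κ*u^2/16 - 2 * |p| * u = (16*p^2 + κ^2*u^2/16 - 2 * |p| * u * κ)/κ := by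
      field_simp
    rw [heq]
    exact div_nonneg (by linarith) hκ.le
  have hchain : p * Real.log t ≤ 2 * |p| * u := by
    calc p * Real.log t ≤ |p| * Real.log t :=
          mul_le_mul_of_nonneg_right (le_abs_self p) hlognn
      _ ≤ |p| * (2*(s - 1/s)) := mul_le_mul_of_nonneg_left hlog (abs_nonneg p)
      _ = 2 * |p| * u := by rw [hu]; ring
  rw [← huv]
  exact le_trans hchain key

private lemma ratio_aux (κ p t : ℝ) (hκ : 0 < κ) (ht : 0 < t) :
    p * Real.log t ≤ 16*p^2/κ + κ*(t + 1/t - 2)/16 := by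
  rcases le_or_gt 1 t with h | h
  · exact ratio_aux1 κ p t hκ h
  · have h1t : 1 ≤ 1/t := by rw [le_div_iff₀ ht]; linarith
    have h0 := ratio_aux1 κ (-p) (1/t) hκ h1t
    have hl : Real.log (1/t) = -Real.log t := by rw [one_div, Real.log_inv]
    have h3 : 1/(1/t) = t := one_div_one_div t
    rw [hl, h3] at h0
    calc p * Real.log t = (-p) * (-Real.log t) := by ring
      _ ≤ 16*(-p)^2/κ + κ*(1/t + t - 2)/16 := h0
      _ = 16*p^2/κ + κ*(t + 1/t - 2)/16 := by ring

private lemma ratio_rpow (κ p x y : ℝ) (hκ : 0 < κ) (hx : 0 < x) (hy : 0 < y) :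
    (x/y) ^ p ≤ Real.exp (16*p^2/κ) * Real.exp (κ*(x-y)^2/(16*(x*y))) := by
  have ht : 0 < x/y := div_pos hx hy
  rw [← Real.exp_add, Real.rpow_def_of_pos ht, Real.exp_le_exp]
  have heq : κ*((x/y) + 1/(x/y) - 2)/16 = κ*(x-y)^2/(16*(x*y)) := by
    field_simp; ring
  have := ratio_aux κ p (x/y) hκ ht
  rw [heq] at this
  linarith [this, mul_comm (Real.log (x/y)) p]

private noncomputable def gfun (S x₀ x : ℝ) : ℝ := S/2 * ((x - x₀) * (x*(1-x)) ^ (-(1:ℝ)/2))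

private noncomputable def gfun' (S x₀ x : ℝ) : ℝ := S/4 * ((x + x₀ - 2*x*x₀) * (x*(1-x)) ^ (-(3:ℝ)/2))

private lemma gfun_hasDerivAt (S x₀ x : ℝ) (hx : 0 < x) (hx1 : x < 1) :
    HasDerivAt (gfun S x₀) (gfun' S x₀ x) x := by
  have hu : 0 < x*(1-x) := mul_pos hx (by linarith)
  have h1 : HasDerivAt (fun t : ℝ => t*(1-t)) (1 - 2*x) x := by
    have := (hasDerivAt_id x).mul ((hasDerivAt_const x (1:ℝ)).sub (hasDerivAt_id x))
    refine this.congr_deriv ?_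
    simp only [id_eq, Pi.sub_apply]
    ring
  have h2 : HasDerivAt (fun t : ℝ => (t*(1-t)) ^ (-(1:ℝ)/2))
      ((1-(2:ℝ)*x) * (-(1:ℝ)/2) * (x*(1-x)) ^ (-(1:ℝ)/2 - 1)) x :=
    h1.rpow_const (Or.inl hu.ne')
  have h3 : HasDerivAt (fun t : ℝ => (t - x₀)) 1 x := (hasDerivAt_id x).sub_const x₀
  have h4 := (h3.mul h2).const_mul (S/2)
  refine h4.congr_deriv ?_
  have hsplit : (x*(1-x)) ^ (-(1:ℝ)/2) = (x*(1-x)) * (x*(1-x)) ^ (-(3:ℝ)/2) := by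
    rw [show (-(1:ℝ)/2) = 1 + (-(3:ℝ)/2) by norm_num, Real.rpow_add hu, Real.rpow_one]
  have he : (-(1:ℝ)/2 - 1) = (-(3:ℝ)/2) := by norm_num
  rw [gfun', he, hsplit]; ring

private lemma gfun_sq (S x₀ x : ℝ) (hx : 0 < x) (hx1 : x < 1) :
    (gfun S x₀ x)^2 = S^2*(x-x₀)^2/(4*(x*(1-x))) := by
  have hu : 0 < x*(1-x) := mul_pos hx (by linarith)
  have hww : ((x*(1-x)) ^ (-(1:ℝ)/2))^2 = (x*(1-x))⁻¹ := by
    rw [pow_two, ← Real.rpow_add hu, show (-(1:ℝ)/2 + -(1:ℝ)/2) = (-1 : ℝ) by norm_num,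
      Real.rpow_neg_one]
  have hc : (x*(1-x))⁻¹ * (x*(1-x)) = 1 := inv_mul_cancel₀ hu.ne'
  rw [gfun, mul_pow, mul_pow, hww, eq_div_iff (by positivity : (4*(x*(1-x))) ≠ 0),
    show (S/2)^2 * ((x-x₀)^2 * (x*(1-x))⁻¹) * (4*(x*(1-x)))
      = S^2*(x-x₀)^2 * ((x*(1-x))⁻¹*(x*(1-x))) by ring, hc, mul_one]

private lemma gfun'_pos (S x₀ x : ℝ) (hS : 0 < S) (hx₀ : 0 < x₀) (hx₀1 : x₀ < 1)
    (hx : 0 < x) (hx1 : x < 1) : 0 < gfun' S x₀ x := by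
  have hu : 0 < x*(1-x) := mul_pos hx (by linarith)
  have hq : 0 < x + x₀ - 2*x*x₀ := by nlinarith
  exact mul_pos (by linarith) (mul_pos hq (Real.rpow_pos_of_pos hu _))

private lemma gfun_injOn (S x₀ : ℝ) (hS : 0 < S) (hx₀ : 0 < x₀) (hx₀1 : x₀ < 1) :
    Set.InjOn (gfun S x₀) (Set.Ioo 0 1) := by
  apply StrictMonoOn.injOn
  apply strictMonoOn_of_deriv_pos (convex_Ioo 0 1)
  · intro x hx
    exact (gfun_hasDerivAt S x₀ x hx.1 hx.2).continuousAt.continuousWithinAt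
  · intro x hx
    rw [interior_Ioo] at hx
    rw [(gfun_hasDerivAt S x₀ x hx.1 hx.2).deriv]
    exact gfun'_pos S x₀ x hS hx₀ hx₀1 hx.1 hx.2

private lemma gauss_int (S x₀ : ℝ) (hS : 0 < S) (hx₀ : 0 < x₀) (hx₀1 : x₀ < 1) :
    IntegrableOn (fun x => |gfun' S x₀ x| * Real.exp (-(gfun S x₀ x)^2/2)) (Set.Ioo 0 1) volume ∧
    (∫ x in Set.Ioo (0:ℝ) 1, |gfun' S x₀ x| * Real.exp (-(gfun S x₀ x)^2/2)) ≤
      Real.sqrt (2*Real.pi) := by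
  have hφeq : (fun u : ℝ => Real.exp (-u^2/2)) = fun u => Real.exp (-(1/2 : ℝ)*u^2) := by
    funext u; congr 1; ring
  have hφint : Integrable (fun u : ℝ => Real.exp (-u^2/2)) := by
    rw [hφeq]; exact integrable_exp_neg_mul_sq (by norm_num)
  have hφnn : ∀ u : ℝ, 0 ≤ Real.exp (-u^2/2) := fun u => (Real.exp_pos _).le
  have hmeas : MeasurableSet (Set.Ioo (0:ℝ) 1) := measurableSet_Ioo
  have hder : ∀ x ∈ Set.Ioo (0:ℝ) 1,
      HasDerivWithinAt (gfun S x₀) (gfun' S x₀ x) (Set.Ioo 0 1) x :=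
    fun x hx => (gfun_hasDerivAt S x₀ x hx.1 hx.2).hasDerivWithinAt
  have hinj := gfun_injOn S x₀ hS hx₀ hx₀1
  have himg := MeasureTheory.integral_image_eq_integral_abs_deriv_smul hmeas hder hinj
    (fun u : ℝ => Real.exp (-u^2/2))
  simp only [smul_eq_mul] at himg
  constructor
  · have hint := (MeasureTheory.integrableOn_image_iff_integrableOn_abs_deriv_smul
      hmeas hder hinj (fun u : ℝ => Real.exp (-u^2/2))).1 hφint.integrableOn
    simpa only [smul_eq_mul] using hint
  · rw [← himg]
    calc (∫ u in gfun S x₀ '' Set.Ioo 0 1, Real.exp (-u^2/2))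
        ≤ ∫ u : ℝ, Real.exp (-u^2/2) :=
          MeasureTheory.setIntegral_le_integral hφint (Filter.Eventually.of_forall hφnn)
      _ = Real.sqrt (2*Real.pi) := by
          rw [hφeq, integral_gaussian]
          congr 1
          rw [div_div_eq_mul_div, div_one, mul_comm]
set_option maxHeartbeats 1000000 in
/-- for `a > 0`, `b ∈ ℝ`, `κ > 0`, there is `C = C(a,b,κ) > 0` such that
for all `A > 0`, `B > κ/A`,
`∫₀¹ (1-x)^{-a} x^{-b} e^{-A²/(4(1-x))} e^{-B²/(4x)} dx
  ≤ C e^{-(A+B)²/4} A^{1-a} B^{1-b} (A+B)^{a+b-2}`. -/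
theorem stmt_9 (a b κ : ℝ) (ha : 0 < a) (hκ : 0 < κ) :
    ∃ C : ℝ, 0 < C ∧
      ∀ A B : ℝ, 0 < A → κ / A < B →
        (∫ x in Set.Ioo (0 : ℝ) 1,
            (1 - x) ^ (-a) * x ^ (-b) * Real.exp (-A ^ 2 / (4 * (1 - x))) *
              Real.exp (-B ^ 2 / (4 * x))) ≤
          C * Real.exp (-(A + B) ^ 2 / 4) * A ^ (1 - a) * B ^ (1 - b) *
            (A + B) ^ (a + b - 2) := by
  refine ⟨4*Real.sqrt (2*Real.pi)/Real.sqrt κ *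
    (Real.exp (16*((3:ℝ)/2-a)^2/κ) * Real.exp (16*((3:ℝ)/2-b)^2/κ)),
    mul_pos (div_pos (mul_pos (by norm_num) (Real.sqrt_pos.2 (by positivity)))
      (Real.sqrt_pos.2 hκ)) (mul_pos (Real.exp_pos _) (Real.exp_pos _)), ?_⟩
  intro A B hA hBA
  have hB : 0 < B := lt_trans (div_pos hκ hA) hBA
  set S := A + B with hSdef
  have hS : 0 < S := by rw [hSdef]; linarith
  set y := B / S with hy
  have hy0 : 0 < y := div_pos hB hS
  have hy1 : y < 1 := by rw [hy, div_lt_one hS]; linarith [hSdef]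
  have h1ypos : 0 < 1 - y := by linarith
  have h1y : 1 - y = A / S := by
    rw [hy]; field_simp; linarith [hSdef]
  have hA' : A = S*(1-y) := by rw [h1y]; field_simp
  have hB' : B = S*y := by rw [hy]; field_simp
  have hAB : κ < A*B := by
    have h := (div_lt_iff₀ hA).1 hBA
    nlinarith [h]
  have hκS : κ ≤ S^2*(y*(1-y)) := by
    have hprod : S^2*(y*(1-y)) = A*B := by rw [hy, h1y]; field_simp
    linarith [hprod, hAB]
  clear_value S y
  -- abbreviations for constants
  set Ka := Real.exp (16*((3:ℝ)/2-a)^2/κ) with hKa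
  set Kb := Real.exp (16*((3:ℝ)/2-b)^2/κ) with hKb
  set c₀ := Ka * Kb * ((1-y) ^ ((3:ℝ)/2-a) * y ^ ((3:ℝ)/2-b)) * (4/(S*(y*(1-y)))) *
    Real.exp (-S^2/4) with hc₀
  have hc₀nn : 0 ≤ c₀ := by
    rw [hc₀]
    have h1 : 0 < Ka * Kb := mul_pos (Real.exp_pos _) (Real.exp_pos _)
    have h2 : 0 < (1-y) ^ ((3:ℝ)/2-a) * y ^ ((3:ℝ)/2-b) :=
      mul_pos (Real.rpow_pos_of_pos h1ypos _) (Real.rpow_pos_of_pos hy0 _)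
    have h3 : 0 < 4/(S*(y*(1-y))) :=
      div_pos (by norm_num) (mul_pos hS (mul_pos hy0 h1ypos))
    positivity
  -- pointwise bound
  have hpt : ∀ x ∈ Set.Ioo (0:ℝ) 1,
      (1 - x) ^ (-a) * x ^ (-b) * Real.exp (-A ^ 2 / (4 * (1 - x))) *
        Real.exp (-B ^ 2 / (4 * x))
        ≤ c₀ * (|gfun' S y x| * Real.exp (-(gfun S y x)^2/2)) := by
    rintro x ⟨hx, hx1⟩
    have h1x : 0 < 1 - x := by linarith
    have hu : 0 < x * (1 - x) := mul_pos hx h1x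
    have hg2 : (gfun S y x)^2 = S^2*(x-y)^2/(4*(x*(1-x))) := gfun_sq S y x hx hx1
    set Ex := S^2*(x-y)^2/(4*(x*(1-x))) with hExdef
    have hexp : Real.exp (-A ^ 2 / (4 * (1 - x))) * Real.exp (-B ^ 2 / (4 * x))
        = Real.exp (-S^2/4) * Real.exp (-Ex) := by
      rw [← Real.exp_add, ← Real.exp_add]
      congr 1
      rw [hExdef, hA', hB']
      field_simp
      ring
    have hexp2 : Real.exp (Ex/4) * Real.exp (Ex/4) * Real.exp (-Ex) = Real.exp (-Ex/2) := by
      rw [← Real.exp_add, ← Real.exp_add]; congr 1; ring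
    -- bound for x-part
    have hcmp1 : κ*(x-y)^2/(16*(x*y)) ≤ Ex/4 := by
      have hkey : κ*(1-x) ≤ S^2*y := by
        nlinarith [hκS, mul_nonneg (mul_nonneg (mul_nonneg hS.le hS.le) hy0.le) hy0.le,
          mul_nonneg hκ.le hx.le]
      have h4 : Ex/4 = S^2*(x-y)^2/(16*(x*(1-x))) := by
        rw [hExdef, div_div]; congr 1; ring
      rw [h4, div_le_div_iff₀ (mul_pos (by norm_num : (0:ℝ) < 16) (mul_pos hx hy0))
        (mul_pos (by norm_num : (0:ℝ) < 16) (mul_pos hx h1x))]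
      nlinarith [mul_nonneg (mul_nonneg (sq_nonneg (x-y)) hx.le) (sub_nonneg.2 hkey)]
    have hb1 : x ^ (-b) ≤ Kb * (y ^ ((3:ℝ)/2-b) * (x ^ (-(3:ℝ)/2) * Real.exp (Ex/4))) := by
      have hxy : y ^ ((3:ℝ)/2-b) * (x/y) ^ ((3:ℝ)/2-b) = x ^ ((3:ℝ)/2-b) := by
        rw [Real.div_rpow hx.le hy0.le, mul_comm, div_mul_cancel₀]
        exact (Real.rpow_pos_of_pos hy0 _).ne'
      have h0 : x ^ (-b) = x ^ (-(3:ℝ)/2) * (y ^ ((3:ℝ)/2-b) * (x/y) ^ ((3:ℝ)/2-b)) := by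
        rw [hxy, ← Real.rpow_add hx]; congr 1; ring
      rw [h0]
      have hr2 : (x/y) ^ ((3:ℝ)/2-b) ≤ Kb * Real.exp (Ex/4) := by
        refine le_trans (ratio_rpow κ ((3:ℝ)/2-b) x y hκ hx hy0) ?_
        rw [hKb]
        exact mul_le_mul_of_nonneg_left (Real.exp_le_exp.2 hcmp1) (Real.exp_pos _).le
      calc x ^ (-(3:ℝ)/2) * (y ^ ((3:ℝ)/2-b) * (x/y) ^ ((3:ℝ)/2-b))
          ≤ x ^ (-(3:ℝ)/2) * (y ^ ((3:ℝ)/2-b) * (Kb * Real.exp (Ex/4))) := by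
            refine mul_le_mul_of_nonneg_left ?_ (Real.rpow_pos_of_pos hx _).le
            exact mul_le_mul_of_nonneg_left hr2 (Real.rpow_pos_of_pos hy0 _).le
        _ = Kb * (y ^ ((3:ℝ)/2-b) * (x ^ (-(3:ℝ)/2) * Real.exp (Ex/4))) := by ring
    -- bound for (1-x)-part
    have hcmp2 : κ*((1-x)-(1-y))^2/(16*((1-x)*(1-y))) ≤ Ex/4 := by
      have hkey : κ*x ≤ S^2*(1-y) := by
        nlinarith [hκS, mul_nonneg (mul_nonneg (mul_nonneg hS.le hS.le) h1ypos.le) h1ypos.le,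
          mul_nonneg hκ.le h1x.le]
      have h4 : Ex/4 = S^2*(x-y)^2/(16*(x*(1-x))) := by
        rw [hExdef, div_div]; congr 1; ring
      rw [h4, div_le_div_iff₀ (mul_pos (by norm_num : (0:ℝ) < 16) (mul_pos h1x h1ypos))
        (mul_pos (by norm_num : (0:ℝ) < 16) (mul_pos hx h1x))]
      nlinarith [mul_nonneg (mul_nonneg (sq_nonneg (x-y)) h1x.le) (sub_nonneg.2 hkey)]
    have hb2 : (1-x) ^ (-a) ≤ Ka * ((1-y) ^ ((3:ℝ)/2-a) * ((1-x) ^ (-(3:ℝ)/2) * Real.exp (Ex/4))) := by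
      have hxy : (1-y) ^ ((3:ℝ)/2-a) * ((1-x)/(1-y)) ^ ((3:ℝ)/2-a) = (1-x) ^ ((3:ℝ)/2-a) := by
        rw [Real.div_rpow h1x.le h1ypos.le, mul_comm, div_mul_cancel₀]
        exact (Real.rpow_pos_of_pos h1ypos _).ne'
      have h0 : (1-x) ^ (-a) = (1-x) ^ (-(3:ℝ)/2) * ((1-y) ^ ((3:ℝ)/2-a) * ((1-x)/(1-y)) ^ ((3:ℝ)/2-a)) := by
        rw [hxy, ← Real.rpow_add h1x]; congr 1; ring
      rw [h0]
      have hr2 : ((1-x)/(1-y)) ^ ((3:ℝ)/2-a) ≤ Ka * Real.exp (Ex/4) := by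
        refine le_trans (ratio_rpow κ ((3:ℝ)/2-a) (1-x) (1-y) hκ h1x h1ypos) ?_
        rw [hKa]
        exact mul_le_mul_of_nonneg_left (Real.exp_le_exp.2 hcmp2) (Real.exp_pos _).le
      calc (1-x) ^ (-(3:ℝ)/2) * ((1-y) ^ ((3:ℝ)/2-a) * ((1-x)/(1-y)) ^ ((3:ℝ)/2-a))
          ≤ (1-x) ^ (-(3:ℝ)/2) * ((1-y) ^ ((3:ℝ)/2-a) * (Ka * Real.exp (Ex/4))) := by
            refine mul_le_mul_of_nonneg_left ?_ (Real.rpow_pos_of_pos h1x _).le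
            exact mul_le_mul_of_nonneg_left hr2 (Real.rpow_pos_of_pos h1ypos _).le
        _ = Ka * ((1-y) ^ ((3:ℝ)/2-a) * ((1-x) ^ (-(3:ℝ)/2) * Real.exp (Ex/4))) := by ring
    -- Jacobian bound
    have hb3 : (1-x) ^ (-(3:ℝ)/2) * x ^ (-(3:ℝ)/2) ≤ 4/(S*(y*(1-y))) * |gfun' S y x| := by
      rw [abs_of_pos (gfun'_pos S y x hS hy0 hy1 hx hx1),
        mul_comm ((1-x) ^ (-(3:ℝ)/2)) (x ^ (-(3:ℝ)/2)), ← Real.mul_rpow hx.le h1x.le, gfun']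
      have hw : 0 < (x*(1-x)) ^ (-(3:ℝ)/2) := Real.rpow_pos_of_pos hu _
      have hQ : y*(1-y) ≤ x + y - 2*x*y := by
        nlinarith [mul_nonneg hx.le (sq_nonneg (1-y)), mul_nonneg h1x.le (sq_nonneg y)]
      have heq : 4/(S*(y*(1-y))) * (S/4*((x + y - 2*x*y) * (x*(1-x)) ^ (-(3:ℝ)/2)))
          = ((x + y - 2*x*y)/(y*(1-y))) * (x*(1-x)) ^ (-(3:ℝ)/2) := by
        field_simp
      rw [heq]
      nth_rewrite 1 [← one_mul ((x*(1-x)) ^ (-(3:ℝ)/2))]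
      refine mul_le_mul_of_nonneg_right ?_ hw.le
      rw [le_div_iff₀ (mul_pos hy0 h1ypos)]
      linarith [hQ]
    -- assemble
    calc (1 - x) ^ (-a) * x ^ (-b) * Real.exp (-A ^ 2 / (4 * (1 - x))) *
          Real.exp (-B ^ 2 / (4 * x))
        = (1 - x) ^ (-a) * x ^ (-b) * (Real.exp (-S^2/4) * Real.exp (-Ex)) := by
          rw [mul_assoc, hexp]
      _ ≤ (Ka * ((1-y) ^ ((3:ℝ)/2-a) * ((1-x) ^ (-(3:ℝ)/2) * Real.exp (Ex/4))))
          * (Kb * (y ^ ((3:ℝ)/2-b) * (x ^ (-(3:ℝ)/2) * Real.exp (Ex/4))))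
          * (Real.exp (-S^2/4) * Real.exp (-Ex)) := by
          refine mul_le_mul_of_nonneg_right ?_
            (mul_nonneg (Real.exp_pos _).le (Real.exp_pos _).le)
          refine mul_le_mul hb2 hb1 (Real.rpow_pos_of_pos hx _).le ?_
          exact mul_nonneg (Real.exp_pos _).le (mul_nonneg (Real.rpow_pos_of_pos h1ypos _).le
            (mul_nonneg (Real.rpow_pos_of_pos h1x _).le (Real.exp_pos _).le))
      _ = Ka * Kb * ((1-y) ^ ((3:ℝ)/2-a) * y ^ ((3:ℝ)/2-b))
          * ((1-x) ^ (-(3:ℝ)/2) * x ^ (-(3:ℝ)/2))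
          * (Real.exp (-S^2/4) * (Real.exp (Ex/4) * Real.exp (Ex/4) * Real.exp (-Ex))) := by
          ring
      _ = Ka * Kb * ((1-y) ^ ((3:ℝ)/2-a) * y ^ ((3:ℝ)/2-b))
          * ((1-x) ^ (-(3:ℝ)/2) * x ^ (-(3:ℝ)/2))
          * (Real.exp (-S^2/4) * Real.exp (-Ex/2)) := by rw [hexp2]
      _ ≤ Ka * Kb * ((1-y) ^ ((3:ℝ)/2-a) * y ^ ((3:ℝ)/2-b))
          * (4/(S*(y*(1-y))) * |gfun' S y x|)
          * (Real.exp (-S^2/4) * Real.exp (-Ex/2)) := by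
          refine mul_le_mul_of_nonneg_right ?_
            (mul_nonneg (Real.exp_pos _).le (Real.exp_pos _).le)
          refine mul_le_mul_of_nonneg_left hb3 ?_
          exact mul_nonneg (mul_nonneg (Real.exp_pos _).le (Real.exp_pos _).le)
            (mul_nonneg (Real.rpow_pos_of_pos h1ypos _).le (Real.rpow_pos_of_pos hy0 _).le)
      _ = c₀ * (|gfun' S y x| * Real.exp (-(gfun S y x)^2/2)) := by
          rw [hc₀, hg2]
          ring
  -- nonnegativity of the integrand
  have hfnn : ∀ x ∈ Set.Ioo (0:ℝ) 1,
      0 ≤ (1 - x) ^ (-a) * x ^ (-b) * Real.exp (-A ^ 2 / (4 * (1 - x))) *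
        Real.exp (-B ^ 2 / (4 * x)) := by
    rintro x ⟨hx, hx1⟩
    have h1x : (0:ℝ) < 1 - x := by linarith
    exact mul_nonneg (mul_nonneg (mul_nonneg (Real.rpow_pos_of_pos h1x _).le
      (Real.rpow_pos_of_pos hx _).le) (Real.exp_pos _).le) (Real.exp_pos _).le
  have hgauss := gauss_int S y hS hy0 hy1
  have hIg : Integrable (fun x => c₀ * (|gfun' S y x| * Real.exp (-(gfun S y x)^2/2)))
      (volume.restrict (Set.Ioo 0 1)) := hgauss.1.const_mul c₀
  have h0 : (fun _ => (0:ℝ)) ≤ᵐ[volume.restrict (Set.Ioo (0:ℝ) 1)]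
      (fun x => (1 - x) ^ (-a) * x ^ (-b) * Real.exp (-A ^ 2 / (4 * (1 - x))) *
        Real.exp (-B ^ 2 / (4 * x))) := by
    rw [Filter.EventuallyLE, ae_restrict_iff' measurableSet_Ioo]
    exact Filter.Eventually.of_forall hfnn
  have hle : (fun x => (1 - x) ^ (-a) * x ^ (-b) * Real.exp (-A ^ 2 / (4 * (1 - x))) *
        Real.exp (-B ^ 2 / (4 * x))) ≤ᵐ[volume.restrict (Set.Ioo (0:ℝ) 1)]
      (fun x => c₀ * (|gfun' S y x| * Real.exp (-(gfun S y x)^2/2))) := by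
    rw [Filter.EventuallyLE, ae_restrict_iff' measurableSet_Ioo]
    exact Filter.Eventually.of_forall hpt
  have hmono := MeasureTheory.integral_mono_of_nonneg h0 hIg hle
  -- final constant comparison
  have hsplit1 : y ^ ((3:ℝ)/2-b) = y ^ ((1:ℝ)-b) * y ^ ((1:ℝ)/2) := by
    rw [← Real.rpow_add hy0]; congr 1; ring
  have hsplit2 : (1-y) ^ ((3:ℝ)/2-a) = (1-y) ^ ((1:ℝ)-a) * (1-y) ^ ((1:ℝ)/2) := by
    rw [← Real.rpow_add h1ypos]; congr 1; ring
  have hy12 : y ^ ((1:ℝ)/2) = Real.sqrt y := (Real.sqrt_eq_rpow y).symm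
  have h1y12 : (1-y) ^ ((1:ℝ)/2) = Real.sqrt (1-y) := (Real.sqrt_eq_rpow (1-y)).symm
  have hmain : Real.sqrt κ * (Real.sqrt y * Real.sqrt (1-y)) ≤ S * (y*(1-y)) := by
    rw [← Real.sqrt_mul hy0.le, ← Real.sqrt_mul hκ.le]
    calc Real.sqrt (κ*(y*(1-y))) ≤ Real.sqrt ((S*(y*(1-y)))^2) := by
          apply Real.sqrt_le_sqrt
          nlinarith [mul_le_mul_of_nonneg_right hκS (mul_pos hy0 h1ypos).le]
      _ = S*(y*(1-y)) := Real.sqrt_sq (mul_pos hS (mul_pos hy0 h1ypos)).le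
  have hstep : 4/(S*(y*(1-y))) * (Real.sqrt (1-y) * Real.sqrt y) * Real.sqrt (2*Real.pi)
      ≤ 4*Real.sqrt (2*Real.pi)/Real.sqrt κ := by
    rw [div_mul_eq_mul_div, div_mul_eq_mul_div,
      div_le_div_iff₀ (mul_pos hS (mul_pos hy0 h1ypos)) (Real.sqrt_pos.2 hκ)]
    nlinarith [hmain, Real.sqrt_nonneg (2*Real.pi),
      mul_le_mul_of_nonneg_left hmain (mul_nonneg (by norm_num : (0:ℝ) ≤ 4)
        (Real.sqrt_nonneg (2*Real.pi)))]
  have hSpow : S^((1:ℝ)-a) * S^((1:ℝ)-b) * S^(a+b-2) = 1 := by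
    rw [← Real.rpow_add hS, ← Real.rpow_add hS,
      show ((1:ℝ) - a + (1 - b) + (a + b - 2) : ℝ) = 0 by ring, Real.rpow_zero]
  have hRHS : 4*Real.sqrt (2*Real.pi)/Real.sqrt κ * (Ka * Kb) * Real.exp (-S ^ 2 / 4)
        * A ^ (1 - a) * B ^ (1 - b) * S ^ (a + b - 2)
      = 4*Real.sqrt (2*Real.pi)/Real.sqrt κ * (Ka * Kb) * Real.exp (-S ^ 2 / 4)
        * ((1-y) ^ ((1:ℝ)-a) * y ^ ((1:ℝ)-b)) := by
    rw [hA', hB', Real.mul_rpow hS.le h1ypos.le, Real.mul_rpow hS.le hy0.le]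
    calc 4*Real.sqrt (2*Real.pi)/Real.sqrt κ * (Ka * Kb) * Real.exp (-S ^ 2 / 4)
          * (S ^ ((1:ℝ)-a) * (1-y) ^ ((1:ℝ)-a)) * (S ^ ((1:ℝ)-b) * y ^ ((1:ℝ)-b)) * S ^ (a+b-2)
        = 4*Real.sqrt (2*Real.pi)/Real.sqrt κ * (Ka * Kb) * Real.exp (-S ^ 2 / 4)
          * ((1-y) ^ ((1:ℝ)-a) * y ^ ((1:ℝ)-b)) * (S^((1:ℝ)-a) * S^((1:ℝ)-b) * S^(a+b-2)) := by
          ring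
      _ = _ := by rw [hSpow, mul_one]
  calc (∫ x in Set.Ioo (0 : ℝ) 1,
          (1 - x) ^ (-a) * x ^ (-b) * Real.exp (-A ^ 2 / (4 * (1 - x))) *
            Real.exp (-B ^ 2 / (4 * x)))
      ≤ ∫ x in Set.Ioo (0:ℝ) 1, c₀ * (|gfun' S y x| * Real.exp (-(gfun S y x)^2/2)) := hmono
    _ = c₀ * ∫ x in Set.Ioo (0:ℝ) 1, |gfun' S y x| * Real.exp (-(gfun S y x)^2/2) :=
        MeasureTheory.integral_const_mul c₀ _
    _ ≤ c₀ * Real.sqrt (2*Real.pi) := mul_le_mul_of_nonneg_left hgauss.2 hc₀nn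
    _ ≤ 4*Real.sqrt (2*Real.pi)/Real.sqrt κ * (Ka * Kb) * Real.exp (-S ^ 2 / 4)
        * ((1-y) ^ ((1:ℝ)-a) * y ^ ((1:ℝ)-b)) := by
        have hG : 0 ≤ Ka * Kb * Real.exp (-S^2/4) * ((1-y) ^ ((1:ℝ)-a) * y ^ ((1:ℝ)-b)) :=
          mul_nonneg (mul_nonneg (mul_nonneg (Real.exp_pos _).le (Real.exp_pos _).le)
            (Real.exp_pos _).le)
            (mul_nonneg (Real.rpow_pos_of_pos h1ypos _).le (Real.rpow_pos_of_pos hy0 _).le)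
        calc c₀ * Real.sqrt (2*Real.pi)
            = Ka * Kb * Real.exp (-S^2/4) * ((1-y) ^ ((1:ℝ)-a) * y ^ ((1:ℝ)-b))
              * (4/(S*(y*(1-y))) * (Real.sqrt (1-y) * Real.sqrt y) * Real.sqrt (2*Real.pi)) := by
              rw [hc₀, hsplit1, hsplit2, hy12, h1y12]; ring
          _ ≤ Ka * Kb * Real.exp (-S^2/4) * ((1-y) ^ ((1:ℝ)-a) * y ^ ((1:ℝ)-b))
              * (4*Real.sqrt (2*Real.pi)/Real.sqrt κ) := mul_le_mul_of_nonneg_left hstep hG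
          _ = _ := by ring
    _ = 4*Real.sqrt (2*Real.pi)/Real.sqrt κ * (Ka * Kb) * Real.exp (-S ^ 2 / 4)
        * A ^ (1 - a) * B ^ (1 - b) * S ^ (a + b - 2) := hRHS.symm
end

section
/- Let α, β, γ, δ be real numbers with γ > 1 and δ > 0, and let ℓ ≥ 2 be an integer. Then there exists a constant C > 0 such that for every integer n > ℓ, ∑_{p=1}^{n−ℓ} p^α (√n − √p)^β e^{−δ(√p + √γ(√n − √(p+1)))²} ≤ C n^{α − β/2} e^{−δ n}. -/
open Real Finset

lemma poly_exp_bd (a ε : ℝ) (ha : 0 ≤ a) (hε : 0 < ε) :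
    ∃ M : ℝ, 0 < M ∧ ∀ x : ℝ, 1 ≤ x → x ^ a * Real.exp (-(ε * x)) ≤ M := by
  classical
  set m : ℕ := ⌈a⌉₊ with hm
  refine ⟨(m.factorial : ℝ) / ε ^ m, by positivity, fun x hx => ?_⟩
  have hx0 : (0:ℝ) < x := lt_of_lt_of_le one_pos hx
  have h1 : x ^ a ≤ x ^ (m : ℝ) :=
    Real.rpow_le_rpow_of_exponent_le hx (Nat.le_ceil a)
  have h2 : x ^ (m:ℝ) = x ^ m := Real.rpow_natCast x m
  have h3 : (ε * x) ^ m / (m.factorial : ℝ) ≤ Real.exp (ε * x) := by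
    have h4 : (ε*x) ^ m / (m.factorial : ℝ) ≤ ∑ i ∈ range (m+1), (ε*x) ^ i / (i.factorial : ℝ) := by
      refine Finset.single_le_sum (f := fun i => (ε*x)^i / (i.factorial : ℝ)) (fun i _ => by positivity) ?_
      simp
    exact h4.trans (Real.sum_le_exp_of_nonneg (by positivity) (m+1))
  have h5 : x ^ m ≤ (m.factorial : ℝ) / ε ^ m * Real.exp (ε * x) := by
    rw [div_le_iff₀ (by positivity), mul_pow] at h3
    have hεm : (0:ℝ) < ε ^ m := by positivity
    rw [mul_comm (ε ^ m), ← le_div_iff₀ hεm, mul_div_assoc] at h3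
    calc x ^ m ≤ Real.exp (ε*x) * ((m.factorial:ℝ) / ε ^ m) := h3
    _ = (m.factorial : ℝ) / ε ^ m * Real.exp (ε * x) := by ring
  calc x ^ a * Real.exp (-(ε*x)) ≤ ((m.factorial : ℝ) / ε ^ m * Real.exp (ε*x)) * Real.exp (-(ε*x)) := by
        gcongr; exact (h1.trans_eq h2).trans h5
  _ = (m.factorial : ℝ) / ε ^ m := by rw [mul_assoc, ← Real.exp_add]; simp

lemma aux_q1 (g u x : ℝ) (hg : 0 < g) (hx : g * x = 1) : -(x/4) ≤ g*u^2 - u := by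
  nlinarith [sq_nonneg (2*g*u - 1), hg.le]

lemma aux_q2 (g u x : ℝ) (hg : 0 < g) (hx : g * x = 1) : -(x/2) ≤ g*u^2/2 - u := by
  nlinarith [sq_nonneg (g*u - 1), hg.le]

lemma aux_sqle (a b : ℝ) (hb : 0 ≤ b) (h : a^2 ≤ b^2) : a ≤ b := by
  nlinarith [sq_nonneg (a - b), sq_nonneg (a + b)]

lemma aux_usq (t u : ℝ) (h : t/2 - 1 ≤ u) (h2 : 2 ≤ t) : t^2/8 - 1 ≤ u^2 := by
  nlinarith [sq_nonneg (t - 4), sq_nonneg (u - (t/2 - 1))]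

set_option maxHeartbeats 1000000 in
lemma key_ineq_s11 (γ : ℝ) (hγ : 1 < γ) :
    ∃ c C₀ : ℝ, 0 < c ∧ 0 ≤ C₀ ∧ ∀ N P : ℝ, 1 ≤ P → P + 2 ≤ N →
      N + c * (N - P) ≤
        (Real.sqrt P + Real.sqrt γ * (Real.sqrt N - Real.sqrt (P+1)))^2 + C₀ := by
  have hw : 1 < Real.sqrt γ := by
    rw [show (1:ℝ) = Real.sqrt 1 by simp]
    exact Real.sqrt_lt_sqrt (by norm_num) hγ
  have hg : (0:ℝ) < γ - 1 := by linarith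
  refine ⟨min ((Real.sqrt γ - 1)/2) ((γ-1)/16),
    (Real.sqrt γ - 1)/2 + (γ-1)/2 + 1 + 1/(γ-1),
    lt_min (by linarith) (by linarith),
    by have h := one_div_nonneg.mpr hg.le; linarith, fun N P hP hPN => ?_⟩
  have hP0 : (0:ℝ) < P := by linarith
  have hN0 : (0:ℝ) < N := by linarith
  have hs2 : (Real.sqrt P)^2 = P := Real.sq_sqrt hP0.le
  have ht2 : (Real.sqrt N)^2 = N := Real.sq_sqrt hN0.le
  have hs'2 : (Real.sqrt (P+1))^2 = P + 1 := Real.sq_sqrt (by linarith)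
  have hw2 : (Real.sqrt γ)^2 = γ := Real.sq_sqrt (by linarith)
  have hs1 : 1 ≤ Real.sqrt P := by
    rw [show (1:ℝ) = Real.sqrt 1 by simp]
    exact Real.sqrt_le_sqrt hP
  have hs'0 : 0 ≤ Real.sqrt (P+1) := Real.sqrt_nonneg _
  have ht0 : 0 < Real.sqrt N := Real.sqrt_pos.mpr hN0
  have hss' : Real.sqrt P ≤ Real.sqrt (P+1) := Real.sqrt_le_sqrt (by linarith)
  have hs't : Real.sqrt (P+1) ≤ Real.sqrt N := Real.sqrt_le_sqrt (by linarith)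
  have h4sA : N ≤ 4*P → Real.sqrt N ≤ 2 * Real.sqrt P := by
    intro hc
    have h4s : Real.sqrt (4*P) = 2*Real.sqrt P := by
      rw [show (4:ℝ)*P = 2^2*P by norm_num, Real.sqrt_mul (by positivity),
        Real.sqrt_sq (by norm_num : (0:ℝ) ≤ 2)]
    rw [← h4s]; exact Real.sqrt_le_sqrt hc
  have h4sB : 4*P < N → 2 * Real.sqrt P < Real.sqrt N := by
    intro hc
    have h4s : Real.sqrt (4*P) = 2*Real.sqrt P := by
      rw [show (4:ℝ)*P = 2^2*P by norm_num, Real.sqrt_mul (by positivity),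
        Real.sqrt_sq (by norm_num : (0:ℝ) ≤ 2)]
    rw [← h4s]; exact Real.sqrt_lt_sqrt (by positivity) hc
  -- make sqrt's opaque
  obtain ⟨w, hwdef⟩ : ∃ w, Real.sqrt γ = w := ⟨_, rfl⟩
  obtain ⟨s, hsdef⟩ : ∃ s, Real.sqrt P = s := ⟨_, rfl⟩
  obtain ⟨t, htdef⟩ : ∃ t, Real.sqrt N = t := ⟨_, rfl⟩
  obtain ⟨s', hs'def⟩ : ∃ s', Real.sqrt (P+1) = s' := ⟨_, rfl⟩
  rw [hwdef] at hw hw2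
  rw [hsdef] at hs2 hs1 hss' h4sA h4sB
  rw [htdef] at ht2 ht0 hs't h4sA h4sB
  rw [hs'def] at hs'2 hs'0 hss' hs't
  rw [hwdef, hsdef, htdef, hs'def]
  clear hwdef hsdef htdef hs'def
  set c₀ := w - 1 with hc₀def
  have hc₀ : 0 < c₀ := by simp only [hc₀def]; linarith
  set u := t - s' with hudef
  set d := s' - s with hddef
  clear_value c₀ u d
  have hu0 : 0 ≤ u := by simp only [hudef]; linarith
  have hd0 : 0 ≤ d := by simp only [hddef]; linarith
  have hs0 : (0:ℝ) ≤ s := by linarith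
  have hd1 : d * (s' + s) = 1 := by
    simp only [hddef]; linear_combination hs'2 - hs2
  have hfN : (s + w * u)^2 = N + 2*c₀*(s*u) - 2*(u*d) + (γ-1)*u^2 - 1 := by
    simp only [hc₀def, hddef, hudef]
    linear_combination hs2 + (t - s')^2 * hw2 + ht2 - hs'2
  have h2ud : 2*(u*d) ≤ u := by
    have hud0 : 0 ≤ u*d := mul_nonneg hu0 hd0
    have h2ss : (2:ℝ) ≤ s' + s := by linarith
    have h3 := mul_le_mul_of_nonneg_left h2ss hud0
    have h1 : u * d * (s' + s) = u := by rw [mul_assoc, hd1]; ring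
    linarith
  have hut : u * (t + s') = N - P - 1 := by
    simp only [hudef]; linear_combination ht2 - hs'2
  have hginv : (γ-1) * (1/(γ-1)) = 1 := by field_simp
  have hginv0 : 0 ≤ 1/(γ-1) := by positivity
  have hcmin1 : min (c₀/2) ((γ-1)/16) ≤ c₀/2 := min_le_left _ _
  have hcmin2 : min (c₀/2) ((γ-1)/16) ≤ (γ-1)/16 := min_le_right _ _
  have hNP0 : 0 ≤ N - P := by linarith
  have hgoal : N + min (c₀/2) ((γ-1)/16) * (N - P) ≤
      (s + w*u)^2 + (c₀/2 + (γ-1)/2 + 1 + 1/(γ-1)) := by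
    rcases le_or_gt N (4*P) with hcase | hcase
    · have hts : t ≤ 2*s := h4sA hcase
      have hsu : N - P - 1 ≤ 4 * (s*u) := by
        have h4s' : t + s' ≤ 4*s := by linarith
        have h7 := mul_le_mul_of_nonneg_left h4s' hu0
        have he : u*(4*s) = 4*(s*u) := by ring
        linarith
      have hq2 : -((1/(γ-1))/4) ≤ (γ-1)*u^2 - u := aux_q1 _ _ _ hg hginv
      have h5 : c₀/2*(N-P-1) ≤ 2*c₀*(s*u) := by
        have := mul_le_mul_of_nonneg_left hsu (by linarith : (0:ℝ) ≤ c₀/2)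
        linarith
      have hck : min (c₀/2) ((γ-1)/16) * (N - P) ≤ (c₀/2) * (N-P) :=
        mul_le_mul_of_nonneg_right hcmin1 hNP0
      rw [hfN]
      linarith [hck, h5, h2ud, hq2, hginv0, hg.le]
    · have hts : 2*s < t := h4sB hcase
      have hs's : s' ≤ s + 1 := by
        refine aux_sqle _ _ (by linarith) ?_
        rw [hs'2]; nlinarith [hs2, hs0]
      have hut' : t/2 - 1 ≤ u := by simp only [hudef]; linarith
      have ht2' : (2:ℝ) ≤ t := by linarith
      have hu2 : t^2/8 - 1 ≤ u^2 := aux_usq t u hut' ht2'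
      have hq2 : -((1/(γ-1))/2) ≤ (γ-1)*u^2/2 - u := aux_q2 _ _ _ hg hginv
      have h0 : 0 ≤ 2*c₀*(s*u) := by positivity
      have hck : min (c₀/2) ((γ-1)/16) * (N - P) ≤ ((γ-1)/16) * (N-P) :=
        mul_le_mul_of_nonneg_right hcmin2 hNP0
      have hkN : ((γ-1)/16) * (N - P) ≤ ((γ-1)/16) * t^2 := by
        have h1 : N - P ≤ t^2 := by rw [ht2]; linarith
        exact mul_le_mul_of_nonneg_left h1 (by linarith)
      have h6 : ((γ-1)/2)*(t^2/8 - 1) ≤ ((γ-1)/2)*u^2 :=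
        mul_le_mul_of_nonneg_left hu2 (by linarith)
      rw [hfN]
      linarith [hck, hkN, h6, h2ud, hq2, h0, hginv0, hc₀.le]
  rw [hc₀def, hudef]
  exact (by rw [hc₀def, hudef] at hgoal; exact hgoal)

lemma geom_tail (q : ℝ) (hq0 : 0 < q) (hq1 : q < 1) (n m : ℕ) (hmn : m ≤ n) :
    ∑ p ∈ Finset.Icc 1 m, q ^ (n - p) ≤ 1/(1-q) := by
  have h1 : ∑ p ∈ Finset.Icc 1 m, q ^ (n - p)
      = ∑ j ∈ (Finset.Icc 1 m).image (fun p => n - p), q ^ j := by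
    rw [Finset.sum_image]
    intro x hx y hy hxy
    simp only [Finset.mem_coe, Finset.mem_Icc] at hx hy
    beta_reduce at hxy
    omega
  rw [h1]
  have h2 : ∑ j ∈ (Finset.Icc 1 m).image (fun p => n - p), q ^ j
      ≤ ∑ j ∈ Finset.range (n+1), q ^ j := by
    apply Finset.sum_le_sum_of_subset_of_nonneg
    · intro j hj
      simp only [Finset.mem_image, Finset.mem_Icc] at hj
      obtain ⟨x, hx, rfl⟩ := hj
      simp only [Finset.mem_range]; omega
    · intro j _ _; positivity
  refine h2.trans ?_
  rw [geom_sum_eq hq1.ne (n+1)]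
  have hq1' : 0 < 1 - q := by linarith
  have he : (q ^ (n+1) - 1)/(q - 1) = (1 - q^(n+1))/(1-q) := by
    rw [div_eq_div_iff (by linarith) (by linarith)]; ring
  rw [he]
  have hnum : 1 - q^(n+1) ≤ 1 := by
    have : 0 ≤ q^(n+1) := by positivity
    linarith
  gcongr

set_option maxHeartbeats 2000000 in
/-- for reals `α, β, γ, δ` with `γ > 1`, `δ > 0` and an integer `ℓ ≥ 2`,
there is `C > 0` such that for every integer `n > ℓ`,
`∑_{p=1}^{n-ℓ} p^α (√n - √p)^β e^{-δ(√p + √γ(√n - √(p+1)))²} ≤ C n^{α-β/2} e^{-δn}`. -/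
theorem stmt_11 (α β γ δ : ℝ) (hγ : 1 < γ) (hδ : 0 < δ) (ℓ : ℕ) (hℓ : 2 ≤ ℓ) :
    ∃ C : ℝ, 0 < C ∧
      ∀ n : ℕ, ℓ < n →
        (∑ p ∈ Finset.Icc 1 (n - ℓ),
            (p : ℝ) ^ α * (Real.sqrt n - Real.sqrt p) ^ β *
              Real.exp (-δ * (Real.sqrt p +
                Real.sqrt γ * (Real.sqrt n - Real.sqrt ((p : ℝ) + 1))) ^ 2)) ≤
          C * (n : ℝ) ^ (α - β / 2) * Real.exp (-δ * n) := by
  obtain ⟨c, C₀, hc, hC₀, hkey⟩ := key_ineq_s11 γ hγ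
  set a := |α| with hadef
  set b := |β| with hbdef
  have ha0 : 0 ≤ a := abs_nonneg α
  have hb0 : 0 ≤ b := abs_nonneg β
  have hε : 0 < δ * c / 2 := by positivity
  obtain ⟨M₁, hM₁, hM₁'⟩ := poly_exp_bd b (δ*c/2) hb0 hε
  obtain ⟨M₂, hM₂, hM₂'⟩ := poly_exp_bd (a+b) (δ*c/2) (by positivity) hε
  set q := Real.exp (-(δ*c/2)) with hqdef
  have hq0 : 0 < q := Real.exp_pos _
  have hq1 : q < 1 := by
    rw [hqdef, Real.exp_lt_one_iff]; linarith
  have hq1' : 0 < 1 - q := by linarith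
  set K := (4:ℝ)^a * M₁ + (2:ℝ)^a * M₂ with hKdef
  have hK : 0 < K := by positivity
  set D := Real.exp (δ*C₀) * (2:ℝ)^b * K with hDdef
  have hD : 0 < D := by positivity
  refine ⟨D * (1/(1-q)), by positivity, fun n hn => ?_⟩
  have hℓn : ℓ ≤ n := hn.le
  have hN0 : (0:ℝ) < n := by
    have : 0 < n := by omega
    exact_mod_cast this
  -- per-term bound
  have hterm : ∀ p ∈ Finset.Icc 1 (n - ℓ),
      (p : ℝ) ^ α * (Real.sqrt n - Real.sqrt p) ^ β *
        Real.exp (-δ * (Real.sqrt p +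
          Real.sqrt γ * (Real.sqrt n - Real.sqrt ((p : ℝ) + 1))) ^ 2) ≤
      D * (n : ℝ) ^ (α - β/2) * Real.exp (-δ * n) * q ^ (n - p) := by
    intro p hp
    rw [Finset.mem_Icc] at hp
    obtain ⟨hp1, hp2⟩ := hp
    have hpℓn : p + ℓ ≤ n := by omega
    have hpn : p ≤ n := by omega
    have hP1 : (1:ℝ) ≤ (p:ℝ) := by exact_mod_cast hp1
    have hP0 : (0:ℝ) < (p:ℝ) := by linarith
    have hPN : (p:ℝ) + 2 ≤ (n:ℝ) := by
      have : p + 2 ≤ n := by omega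
      exact_mod_cast this
    have hkr : ((n - p : ℕ) : ℝ) = (n:ℝ) - (p:ℝ) := by
      push_cast [Nat.cast_sub hpn]; ring
    have hk2 : (2:ℝ) ≤ ((n - p : ℕ) : ℝ) := by
      have : 2 ≤ n - p := by omega
      exact_mod_cast this
    have hk1 : (1:ℝ) ≤ ((n - p : ℕ) : ℝ) := by linarith
    have hk0 : (0:ℝ) < ((n - p : ℕ) : ℝ) := by linarith
    -- bound 1
    have hb1 : (p:ℝ)^α ≤ (n:ℝ)^α * ((n:ℝ)/(p:ℝ))^a := by
      have e1 : (p:ℝ)^α = (n:ℝ)^α * ((p:ℝ)/(n:ℝ))^α := by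
        rw [← Real.mul_rpow hN0.le (by positivity)]
        congr 1
        field_simp
      have e2 : ((p:ℝ)/(n:ℝ))^α ≤ ((p:ℝ)/(n:ℝ))^(-a) :=
        Real.rpow_le_rpow_of_exponent_ge (by positivity)
          (by rw [div_le_one hN0]; linarith) (neg_abs_le α)
      have e3 : ((p:ℝ)/(n:ℝ))^(-a) = ((n:ℝ)/(p:ℝ))^a := by
        rw [Real.rpow_neg (by positivity), ← Real.inv_rpow (by positivity), inv_div]
      rw [e1]
      refine mul_le_mul_of_nonneg_left ?_ (by positivity)
      rw [← e3]; exact e2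
    -- bound 2
    have hst : Real.sqrt p < Real.sqrt n := by
      apply Real.sqrt_lt_sqrt hP0.le; linarith
    have hs0' : 0 ≤ Real.sqrt p := Real.sqrt_nonneg _
    have ht0' : 0 < Real.sqrt n := Real.sqrt_pos.mpr hN0
    have hts0 : 0 < Real.sqrt n - Real.sqrt p := by linarith
    have hprod : (Real.sqrt n - Real.sqrt p) * (Real.sqrt n + Real.sqrt p)
        = ((n - p : ℕ) : ℝ) := by
      have h1 : (Real.sqrt n)^2 = (n:ℝ) := Real.sq_sqrt hN0.le
      have h2 : (Real.sqrt p)^2 = (p:ℝ) := Real.sq_sqrt hP0.le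
      rw [hkr]; linear_combination h1 - h2
    have hsum_pos : 0 < Real.sqrt n + Real.sqrt p := by linarith
    have heq : Real.sqrt n - Real.sqrt p = ((n-p:ℕ):ℝ) / (Real.sqrt n + Real.sqrt p) := by
      field_simp
      linarith [hprod]
    have hub : Real.sqrt n - Real.sqrt p ≤ ((n-p:ℕ):ℝ) / Real.sqrt n := by
      rw [heq]; gcongr
      linarith
    have hlb : ((n-p:ℕ):ℝ) / (2 * Real.sqrt n) ≤ Real.sqrt n - Real.sqrt p := by
      rw [heq]; gcongr
      linarith
    have htpow : Real.sqrt n = (n:ℝ) ^ (1/2 : ℝ) := Real.sqrt_eq_rpow _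
    have htb : ∀ z : ℝ, (Real.sqrt n) ^ z = (n:ℝ) ^ (z/2) := by
      intro z
      rw [htpow, ← Real.rpow_mul hN0.le]
      congr 1; ring
    have hb2 : (Real.sqrt n - Real.sqrt p)^β ≤ (2:ℝ)^b * ((n-p:ℕ):ℝ)^b * (n:ℝ)^(-(β/2)) := by
      rcases le_or_gt 0 β with hβ | hβ
      · have h1 : (Real.sqrt n - Real.sqrt p)^β ≤ (((n-p:ℕ):ℝ) / Real.sqrt n)^β :=
          Real.rpow_le_rpow hts0.le hub hβ
        have h2 : (((n-p:ℕ):ℝ) / Real.sqrt n)^β = ((n-p:ℕ):ℝ)^β * (n:ℝ)^(-(β/2)) := by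
          rw [Real.div_rpow hk0.le ht0'.le, htb β, div_eq_mul_inv, ← Real.rpow_neg hN0.le]
        have h3 : ((n-p:ℕ):ℝ)^β ≤ ((n-p:ℕ):ℝ)^b :=
          Real.rpow_le_rpow_of_exponent_le hk1 (le_abs_self β)
        have h4 : (1:ℝ) ≤ (2:ℝ)^b := Real.one_le_rpow one_le_two hb0
        calc (Real.sqrt n - Real.sqrt p)^β ≤ ((n-p:ℕ):ℝ)^β * (n:ℝ)^(-(β/2)) := by
              rw [← h2]; exact h1
          _ ≤ ((n-p:ℕ):ℝ)^b * (n:ℝ)^(-(β/2)) := by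
              refine mul_le_mul_of_nonneg_right h3 (by positivity)
          _ ≤ (2:ℝ)^b * (((n-p:ℕ):ℝ)^b * (n:ℝ)^(-(β/2))) :=
              le_mul_of_one_le_left (by positivity) h4
          _ = (2:ℝ)^b * ((n-p:ℕ):ℝ)^b * (n:ℝ)^(-(β/2)) := by ring
      · have hbneg : b = -β := abs_of_neg hβ
        have h1 : (Real.sqrt n - Real.sqrt p)^β ≤ (((n-p:ℕ):ℝ) / (2 * Real.sqrt n))^β :=
          Real.rpow_le_rpow_of_nonpos (by positivity) hlb hβ.le
        have h2 : (((n-p:ℕ):ℝ) / (2 * Real.sqrt n))^β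
            = ((n-p:ℕ):ℝ)^β * (2:ℝ)^(-β) * (n:ℝ)^(-(β/2)) := by
          rw [Real.div_rpow hk0.le (by positivity), Real.mul_rpow (by norm_num) ht0'.le,
            htb β]
          rw [div_eq_mul_inv, mul_inv, ← Real.rpow_neg (by norm_num : (0:ℝ) ≤ 2),
            ← Real.rpow_neg hN0.le]
          ring
        have h3 : ((n-p:ℕ):ℝ)^β ≤ 1 := Real.rpow_le_one_of_one_le_of_nonpos hk1 hβ.le
        have h4 : (1:ℝ) ≤ ((n-p:ℕ):ℝ)^b := Real.one_le_rpow hk1 hb0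
        calc (Real.sqrt n - Real.sqrt p)^β
            ≤ ((n-p:ℕ):ℝ)^β * (2:ℝ)^(-β) * (n:ℝ)^(-(β/2)) := by rw [← h2]; exact h1
          _ = (2:ℝ)^b * ((n-p:ℕ):ℝ)^β * (n:ℝ)^(-(β/2)) := by rw [hbneg]; ring
          _ ≤ (2:ℝ)^b * ((n-p:ℕ):ℝ)^b * (n:ℝ)^(-(β/2)) := by
              refine mul_le_mul_of_nonneg_right ?_ (by positivity)
              exact mul_le_mul_of_nonneg_left (h3.trans h4) (by positivity)
    -- bound 3
    have hf := hkey (n:ℝ) (p:ℝ) hP1 hPN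
    have hqk : Real.exp (-(δ*c/2) * ((n-p:ℕ):ℝ)) = q ^ (n - p) := by
      rw [hqdef, ← Real.exp_nat_mul]
      congr 1; ring
    have hb3 : Real.exp (-δ * (Real.sqrt p +
          Real.sqrt γ * (Real.sqrt n - Real.sqrt ((p : ℝ) + 1))) ^ 2)
        ≤ Real.exp (δ*C₀) * Real.exp (-δ * n) * (q ^ (n-p) * q ^ (n-p)) := by
      rw [← hqk, ← Real.exp_add, ← Real.exp_add, ← Real.exp_add]
      apply Real.exp_le_exp.mpr
      have h7 := mul_le_mul_of_nonneg_left hf hδ.le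
      rw [hkr]
      linarith [h7]
    -- combine
    have hA1 : (0:ℝ) ≤ (n:ℝ)^α * ((n:ℝ)/(p:ℝ))^a := by positivity
    have hA2 : (0:ℝ) ≤ (2:ℝ)^b * ((n-p:ℕ):ℝ)^b * (n:ℝ)^(-(β/2)) := by positivity
    calc (p : ℝ) ^ α * (Real.sqrt n - Real.sqrt p) ^ β *
          Real.exp (-δ * (Real.sqrt p +
            Real.sqrt γ * (Real.sqrt n - Real.sqrt ((p : ℝ) + 1))) ^ 2)
        ≤ ((n:ℝ)^α * ((n:ℝ)/(p:ℝ))^a) * ((2:ℝ)^b * ((n-p:ℕ):ℝ)^b * (n:ℝ)^(-(β/2))) *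
            (Real.exp (δ*C₀) * Real.exp (-δ * n) * (q ^ (n-p) * q ^ (n-p))) := by
          apply mul_le_mul
          · apply mul_le_mul hb1 hb2 (by positivity) hA1
          · exact hb3
          · positivity
          · exact mul_nonneg hA1 hA2
      _ = (Real.exp (δ*C₀) * (2:ℝ)^b) * ((n:ℝ)^α * (n:ℝ)^(-(β/2))) * Real.exp (-δ*n) *
            (((n:ℝ)/(p:ℝ))^a * ((n-p:ℕ):ℝ)^b * q ^ (n-p)) * q ^ (n-p) := by ring
      _ ≤ (Real.exp (δ*C₀) * (2:ℝ)^b) * ((n:ℝ)^α * (n:ℝ)^(-(β/2))) * Real.exp (-δ*n) *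
            K * q ^ (n-p) := by
          have hX : ((n:ℝ)/(p:ℝ))^a * ((n-p:ℕ):ℝ)^b * q ^ (n - p) ≤ K := by
            have hqk2 : (q:ℝ) ^ (n-p) = Real.exp (-(δ*c/2 * ((n-p:ℕ):ℝ))) := by
              rw [← hqk]; congr 1; ring
            rcases le_or_gt (n:ℝ) (4*(p:ℝ)) with hcase | hcase
            · have h1 : ((n:ℝ)/(p:ℝ))^a ≤ (4:ℝ)^a :=
                Real.rpow_le_rpow (by positivity)
                  (by rw [div_le_iff₀ hP0]; linarith) ha0
              have h2 : ((n-p:ℕ):ℝ)^b * q^(n-p) ≤ M₁ := by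
                rw [hqk2]; exact hM₁' _ hk1
              calc ((n:ℝ)/(p:ℝ))^a * ((n-p:ℕ):ℝ)^b * q ^ (n-p)
                  = ((n:ℝ)/(p:ℝ))^a * (((n-p:ℕ):ℝ)^b * q ^ (n-p)) := by ring
                _ ≤ (4:ℝ)^a * M₁ := by
                    apply mul_le_mul h1 h2 (by positivity) (by positivity)
                _ ≤ K := by
                    rw [hKdef]
                    have : (0:ℝ) ≤ (2:ℝ)^a * M₂ := by positivity
                    linarith
            · have hn2k : (n:ℝ) ≤ 2 * ((n-p:ℕ):ℝ) := by rw [hkr]; linarith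
              have h1 : ((n:ℝ)/(p:ℝ))^a ≤ (2 * ((n-p:ℕ):ℝ))^a := by
                apply Real.rpow_le_rpow (by positivity) ?_ ha0
                calc (n:ℝ)/(p:ℝ) ≤ (n:ℝ) := div_le_self hN0.le hP1
                  _ ≤ 2 * ((n-p:ℕ):ℝ) := hn2k
              have h1' : (2 * ((n-p:ℕ):ℝ))^a = (2:ℝ)^a * ((n-p:ℕ):ℝ)^a :=
                Real.mul_rpow (by norm_num) hk0.le
              have h2 : ((n-p:ℕ):ℝ)^(a+b) * q^(n-p) ≤ M₂ := by
                rw [hqk2]; exact hM₂' _ hk1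
              have h3 : ((n-p:ℕ):ℝ)^a * ((n-p:ℕ):ℝ)^b = ((n-p:ℕ):ℝ)^(a+b) :=
                (Real.rpow_add hk0 a b).symm
              calc ((n:ℝ)/(p:ℝ))^a * ((n-p:ℕ):ℝ)^b * q ^ (n-p)
                  ≤ (2:ℝ)^a * ((n-p:ℕ):ℝ)^a * ((n-p:ℕ):ℝ)^b * q ^ (n-p) := by
                    rw [← h1', mul_assoc, mul_assoc ((2 * ((n-p:ℕ):ℝ))^a)]
                    refine mul_le_mul_of_nonneg_right h1 (by positivity)
                _ = (2:ℝ)^a * (((n-p:ℕ):ℝ)^(a+b) * q ^ (n-p)) := by rw [← h3]; ring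
                _ ≤ (2:ℝ)^a * M₂ := by
                    apply mul_le_mul_of_nonneg_left h2 (by positivity)
                _ ≤ K := by
                    rw [hKdef]
                    have : (0:ℝ) ≤ (4:ℝ)^a * M₁ := by positivity
                    linarith
          gcongr
      _ = D * (n : ℝ) ^ (α - β/2) * Real.exp (-δ * n) * q ^ (n - p) := by
          rw [hDdef, ← Real.rpow_add hN0,
            show α + -(β/2) = α - β/2 from by ring]
          ring
  calc (∑ p ∈ Finset.Icc 1 (n - ℓ),
          (p : ℝ) ^ α * (Real.sqrt n - Real.sqrt p) ^ β *
            Real.exp (-δ * (Real.sqrt p +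
              Real.sqrt γ * (Real.sqrt n - Real.sqrt ((p : ℝ) + 1))) ^ 2))
      ≤ ∑ p ∈ Finset.Icc 1 (n - ℓ), D * (n : ℝ) ^ (α - β/2) * Real.exp (-δ * n) * q ^ (n - p) :=
        Finset.sum_le_sum hterm
    _ = D * (n : ℝ) ^ (α - β/2) * Real.exp (-δ * n) *
          ∑ p ∈ Finset.Icc 1 (n - ℓ), q ^ (n - p) := by rw [← Finset.mul_sum]
    _ ≤ D * (n : ℝ) ^ (α - β/2) * Real.exp (-δ * n) * (1/(1-q)) := by
        apply mul_le_mul_of_nonneg_left (geom_tail q hq0 hq1 n (n-ℓ) (by omega)) (by positivity)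
    _ = D * (1/(1-q)) * (n : ℝ) ^ (α - β/2) * Real.exp (-δ * n) := by ring
end

section
/- Let α > 0 be a real number and let d ≥ 1 and n ≥ 0 be integers. Then ∑_{k=0}^{n} (n+1−k)^d e^{kα} ≤ (d e^α / (e^α − 1)) ∑_{k=0}^{n} (n+1−k)^{d−1} e^{kα}. -/
open Real Finset

lemma aux_pow (x : ℝ) (hx : 0 ≤ x) (d : ℕ) :
    (x+1)^(d+1) ≤ x^(d+1) + (d+1)*(x+1)^d := by
  induction d with
  | zero => simp
  | succ d ih =>
    have h1 : (0:ℝ) ≤ x + 1 := by linarith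
    calc (x+1)^(d+1+1) = (x+1)*(x+1)^(d+1) := by ring
      _ ≤ (x+1)*(x^(d+1) + (d+1)*(x+1)^d) := mul_le_mul_of_nonneg_left ih h1
      _ = x^(d+1+1) + x^(d+1) + (d+1)*(x+1)^(d+1) := by ring
      _ ≤ x^(d+1+1) + (x+1)^(d+1) + (d+1)*(x+1)^(d+1) := by
          have := pow_le_pow_left₀ hx (by linarith : x ≤ x+1) (d+1)
          linarith
      _ ≤ x^(d+1+1) + (↑(d+1)+1)*(x+1)^(d+1) := by
          have h0 : (0:ℝ) ≤ (x+1)^(d+1) := by positivity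
          push_cast
          nlinarith [h0]

/-- for `α > 0`, integers `d ≥ 1`, `n ≥ 0`,
`∑_{k=0}^n (n+1-k)^d e^{kα} ≤ (d e^α/(e^α - 1)) ∑_{k=0}^n (n+1-k)^{d-1} e^{kα}`. -/
theorem stmt_16 (α : ℝ) (hα : 0 < α) (d n : ℕ) (hd : 1 ≤ d) :
    (∑ k ∈ Finset.range (n + 1), ((n : ℝ) + 1 - k) ^ d * Real.exp (k * α)) ≤
      (d : ℝ) * Real.exp α / (Real.exp α - 1) *
        ∑ k ∈ Finset.range (n + 1), ((n : ℝ) + 1 - k) ^ (d - 1) * Real.exp (k * α) := by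
  obtain ⟨e, rfl⟩ : ∃ e, d = e + 1 := ⟨d - 1, (Nat.succ_pred_eq_of_pos hd).symm⟩
  have hE : 1 < Real.exp α := by
    have := Real.exp_lt_exp.2 hα
    simpa using this
  have hE1 : (0:ℝ) < Real.exp α - 1 := by linarith
  rw [div_mul_eq_mul_div, le_div_iff₀ hE1]
  simp only [Nat.add_sub_cancel]
  set f : ℕ → ℝ := fun k => ((n : ℝ) + 1 - k) ^ (e+1) * Real.exp ((k+1) * α) with hf
  set g : ℕ → ℝ := fun k => ((e:ℝ)+1) * (((n : ℝ) + 1 - k) ^ e * Real.exp ((k+1) * α)) with hg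
  have key : (∑ k ∈ Finset.range (n + 1), ((n:ℝ)+1-k)^(e+1) * Real.exp (k*α)) * (Real.exp α - 1)
      = (∑ k ∈ Finset.range (n + 1), f k)
        - ∑ k ∈ Finset.range (n + 1), ((n:ℝ)+1-k)^(e+1) * Real.exp (k*α) := by
    rw [Finset.sum_mul, ← Finset.sum_sub_distrib]
    refine Finset.sum_congr rfl fun k _ => ?_
    have hek : Real.exp (((k:ℝ)+1) * α) = Real.exp (k*α) * Real.exp α := by
      rw [← Real.exp_add]; ring_nf
    simp only [hf]
    rw [hek]
    ring
  rw [key]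
  have key2 : ((e:ℝ)+1) * Real.exp α
        * ∑ k ∈ Finset.range (n+1), ((n:ℝ)+1-k)^e * Real.exp (k*α)
      = ∑ k ∈ Finset.range (n+1), g k := by
    rw [Finset.mul_sum]
    refine Finset.sum_congr rfl fun k _ => ?_
    have hek : Real.exp (((k:ℝ)+1) * α) = Real.exp (k*α) * Real.exp α := by
      rw [← Real.exp_add]; ring_nf
    simp only [hg]
    rw [hek]
    ring
  push_cast
  rw [key2, sub_le_iff_le_add]
  -- goal : ∑ f ≤ ∑ g + ∑ a_k^{e+1} e^{kα}
  have hB : ∑ k ∈ Finset.range (n + 1), ((n:ℝ)+1-k)^(e+1) * Real.exp (k*α)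
      = (∑ k ∈ Finset.range n, ((n:ℝ)+1-(k+1))^(e+1) * Real.exp ((k+1)*α))
        + ((n:ℝ)+1-0)^(e+1) * Real.exp (0*α) := by
    rw [Finset.sum_range_succ']
    congr 1
    · refine Finset.sum_congr rfl fun k _ => ?_
      push_cast
      ring_nf
    · push_cast
      ring_nf
  rw [hB, Finset.sum_range_succ f, Finset.sum_range_succ g]
  have hterm : ∀ k ∈ Finset.range n,
      f k ≤ g k + ((n:ℝ)+1-(k+1))^(e+1) * Real.exp ((k+1)*α) := by
    intro k hk
    simp only [Finset.mem_range] at hk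
    have hx : (0:ℝ) ≤ (n:ℝ) - k := by
      have : (k:ℝ) ≤ (n:ℝ) := by exact_mod_cast hk.le
      linarith
    have hpow := aux_pow ((n:ℝ) - k) hx e
    have hexp : (0:ℝ) < Real.exp ((k+1)*α) := Real.exp_pos _
    have h1 : ((n:ℝ) + 1 - k) = ((n:ℝ) - k) + 1 := by ring
    have h2 : ((n:ℝ) + 1 - (k+1)) = ((n:ℝ) - k) := by push_cast; ring
    simp only [hf, hg, h1, h2]
    have := mul_le_mul_of_nonneg_right hpow hexp.le
    push_cast at this ⊢
    nlinarith [this]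
  have hsum := Finset.sum_le_sum hterm
  rw [Finset.sum_add_distrib] at hsum
  have hlast : f n ≤ g n := by
    simp only [hf, hg]
    have h1 : ((n:ℝ) + 1 - n) = 1 := by ring
    rw [h1, one_pow, one_pow, one_mul]
    have hexp : (0:ℝ) < Real.exp (((n:ℝ)+1)*α) := Real.exp_pos _
    have he : (1:ℝ) ≤ (e:ℝ)+1 := by
      have : (0:ℝ) ≤ (e:ℝ) := Nat.cast_nonneg e
      linarith
    nlinarith
  have hpos : (0:ℝ) ≤ ((n:ℝ)+1-0)^(e+1) * Real.exp (0*α) := by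
    have h1 : ((n:ℝ)+1-0) = (n:ℝ)+1 := by ring
    rw [h1]
    positivity
  linarith
end

section
/- Let q > 1, let Q be an open subset of ℝ^N × ℝ, and let u, v be nonnegative functions on Q that are twice continuously differentiable in the space variable and once in the time variable, satisfying ∂_t u − Δu + u^q = 0 and ∂_t v − Δv + v^q = 0 on Q, with v ≤ u on Q. Let c > 0 and set w = (1+c)v − c u. If w ≥ 0 on Q, then ∂_t w − Δw + w^q ≥ 0 on Q, i.e. w is a supersolution of the equation. -/
open Real

lemma iFD_combo {E : Type*} [NormedAddCommGroup E] [NormedSpace ℝ E]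
    (f g : E → ℝ) (x : E) (a b : ℝ)
    (hf : ContDiffAt ℝ 2 f x) (hg : ContDiffAt ℝ 2 g x)
    (m : Fin 2 → E) :
    iteratedFDeriv ℝ 2 (fun y => a * f y + b * g y) x m =
      a * iteratedFDeriv ℝ 2 f x m + b * iteratedFDeriv ℝ 2 g x m := by
  obtain ⟨s, hs, hfs⟩ := hf.contDiffOn le_rfl (by simp)
  obtain ⟨t, ht, hgt⟩ := hg.contDiffOn le_rfl (by simp)
  set O := interior (s ∩ t) with hO
  have hxO : x ∈ O := by
    rw [mem_interior_iff_mem_nhds]; exact Filter.inter_mem hs ht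
  have hOopen : IsOpen O := isOpen_interior
  have hOs : O ⊆ s := fun y hy => (interior_subset hy).1
  have hOt : O ⊆ t := fun y hy => (interior_subset hy).2
  have hfO : ContDiffOn ℝ 2 f O := hfs.mono hOs
  have hgO : ContDiffOn ℝ 2 g O := hgt.mono hOt
  have e1 : iteratedFDeriv ℝ 2 (fun y => a * f y + b * g y) x =
      iteratedFDerivWithin ℝ 2 (fun y => a * f y + b * g y) O x :=
    (iteratedFDerivWithin_of_isOpen 2 hOopen hxO).symm
  have e2 : iteratedFDeriv ℝ 2 f x = iteratedFDerivWithin ℝ 2 f O x :=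
    (iteratedFDerivWithin_of_isOpen 2 hOopen hxO).symm
  have e3 : iteratedFDeriv ℝ 2 g x = iteratedFDerivWithin ℝ 2 g O x :=
    (iteratedFDerivWithin_of_isOpen 2 hOopen hxO).symm
  rw [e1, e2, e3, show (fun y => a * f y + b * g y) = a • f + b • g from rfl,
    iteratedFDerivWithin_add_apply (f := a • f) (g := b • g) ((hfO.const_smul a) x hxO)
      ((hgO.const_smul b) x hxO) hOopen.uniqueDiffOn hxO,
    iteratedFDerivWithin_const_smul_apply (hfO x hxO) hOopen.uniqueDiffOn hxO,
    iteratedFDerivWithin_const_smul_apply (hgO x hxO) hOopen.uniqueDiffOn hxO]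
  simp [smul_eq_mul]

/-- if `u, v ≥ 0` solve `∂_t w - Δw + w^q = 0` on an open set `Q`,
`v ≤ u` on `Q`, and `w = (1+c)v - cu ≥ 0` on `Q`, then `w` is a supersolution:
`∂_t w - Δw + w^q ≥ 0` on `Q`.  Here the Laplacian is written as the sum of the
second derivatives in the coordinate directions. -/
theorem stmt_17 (N : ℕ) (hN : 1 ≤ N) (q : ℝ) (hq : 1 < q)
    (Q : Set (EuclideanSpace ℝ (Fin N) × ℝ)) (hQ : IsOpen Q)
    (u v : EuclideanSpace ℝ (Fin N) → ℝ → ℝ)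
    (hu0 : ∀ p ∈ Q, 0 ≤ u p.1 p.2) (hv0 : ∀ p ∈ Q, 0 ≤ v p.1 p.2)
    (hvu : ∀ p ∈ Q, v p.1 p.2 ≤ u p.1 p.2)
    (hux : ∀ p ∈ Q, ContDiffAt ℝ 2 (fun y => u y p.2) p.1)
    (hvx : ∀ p ∈ Q, ContDiffAt ℝ 2 (fun y => v y p.2) p.1)
    (hut : ∀ p ∈ Q, DifferentiableAt ℝ (u p.1) p.2)
    (hvt : ∀ p ∈ Q, DifferentiableAt ℝ (v p.1) p.2)
    (hueq : ∀ p ∈ Q,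
      deriv (u p.1) p.2 -
        (∑ i : Fin N, iteratedFDeriv ℝ 2 (fun y => u y p.2) p.1
          ![EuclideanSpace.single i 1, EuclideanSpace.single i 1]) +
        u p.1 p.2 ^ q = 0)
    (hveq : ∀ p ∈ Q,
      deriv (v p.1) p.2 -
        (∑ i : Fin N, iteratedFDeriv ℝ 2 (fun y => v y p.2) p.1
          ![EuclideanSpace.single i 1, EuclideanSpace.single i 1]) +
        v p.1 p.2 ^ q = 0)
    (c : ℝ) (hc : 0 < c)
    (hw0 : ∀ p ∈ Q, 0 ≤ (1 + c) * v p.1 p.2 - c * u p.1 p.2) :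
    ∀ p ∈ Q,
      0 ≤ deriv (fun s => (1 + c) * v p.1 s - c * u p.1 s) p.2 -
          (∑ i : Fin N, iteratedFDeriv ℝ 2
            (fun y => (1 + c) * v y p.2 - c * u y p.2) p.1
            ![EuclideanSpace.single i 1, EuclideanSpace.single i 1]) +
          ((1 + c) * v p.1 p.2 - c * u p.1 p.2) ^ q := by
  intro p hp
  set A := u p.1 p.2 with hA
  set B := v p.1 p.2 with hB
  set W := (1 + c) * B - c * A with hW
  have hA0 : 0 ≤ A := hu0 p hp
  have hB0 : 0 ≤ B := hv0 p hp
  have hBA : B ≤ A := hvu p hp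
  have hW0 : 0 ≤ W := hw0 p hp
  -- time derivative
  have hder : deriv (fun s => (1 + c) * v p.1 s - c * u p.1 s) p.2 =
      (1 + c) * deriv (v p.1) p.2 - c * deriv (u p.1) p.2 := by
    have h1 : HasDerivAt (fun s => (1 + c) * v p.1 s - c * u p.1 s)
        ((1 + c) * deriv (v p.1) p.2 - c * deriv (u p.1) p.2) p.2 :=
      (((hvt p hp).hasDerivAt).const_mul (1 + c)).sub
        (((hut p hp).hasDerivAt).const_mul c)
    exact h1.deriv
  -- space second derivatives
  have hspace : ∀ i : Fin N,
      iteratedFDeriv ℝ 2 (fun y => (1 + c) * v y p.2 - c * u y p.2) p.1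
        ![EuclideanSpace.single i 1, EuclideanSpace.single i 1] =
      (1 + c) * iteratedFDeriv ℝ 2 (fun y => v y p.2) p.1
        ![EuclideanSpace.single i 1, EuclideanSpace.single i 1] -
      c * iteratedFDeriv ℝ 2 (fun y => u y p.2) p.1
        ![EuclideanSpace.single i 1, EuclideanSpace.single i 1] := by
    intro i
    have hfun : (fun y => (1 + c) * v y p.2 - c * u y p.2) =
        (fun y => (1 + c) * v y p.2 + (-c) * u y p.2) := by
      funext y; ring
    rw [hfun, iFD_combo (fun y => v y p.2) (fun y => u y p.2) p.1 (1 + c) (-c)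
      (hvx p hp) (hux p hp)]
    ring
  rw [hder, Finset.sum_congr rfl (fun i _ => hspace i)]
  rw [Finset.sum_sub_distrib, ← Finset.mul_sum, ← Finset.mul_sum]
  set Su := ∑ i : Fin N, iteratedFDeriv ℝ 2 (fun y => u y p.2) p.1
    ![EuclideanSpace.single i 1, EuclideanSpace.single i 1] with hSu
  set Sv := ∑ i : Fin N, iteratedFDeriv ℝ 2 (fun y => v y p.2) p.1
    ![EuclideanSpace.single i 1, EuclideanSpace.single i 1] with hSv
  have hu' : deriv (u p.1) p.2 - Su + A ^ q = 0 := hueq p hp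
  have hv' : deriv (v p.1) p.2 - Sv + B ^ q = 0 := hveq p hp
  -- convexity inequality: (1+c) * B^q ≤ c * A^q + W^q
  have hconv : (1 + c) * B ^ q ≤ c * A ^ q + W ^ q := by
    have h1c : (0:ℝ) < 1 + c := by linarith
    have hmem1 : A ∈ Set.Ici (0:ℝ) := hA0
    have hmem2 : W ∈ Set.Ici (0:ℝ) := hW0
    have ha : (0:ℝ) ≤ c / (1 + c) := by positivity
    have hb : (0:ℝ) ≤ 1 / (1 + c) := by positivity
    have hab : c / (1 + c) + 1 / (1 + c) = 1 := by field_simp; ring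
    have := (convexOn_rpow hq.le).2 hmem1 hmem2 ha hb hab
    have harg : (c / (1 + c)) • A + (1 / (1 + c)) • W = B := by
      simp only [smul_eq_mul]; field_simp; ring
    rw [harg] at this
    simp only [smul_eq_mul] at this
    have h2 : (1 + c) * B ^ q ≤ (1 + c) * (c / (1 + c) * A ^ q + 1 / (1 + c) * W ^ q) :=
      by nlinarith
    calc (1 + c) * B ^ q ≤ (1 + c) * (c / (1 + c) * A ^ q + 1 / (1 + c) * W ^ q) := h2
      _ = c * A ^ q + W ^ q := by field_simp
  have hgoal : (1 + c) * deriv (v p.1) p.2 - c * deriv (u p.1) p.2 -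
      ((1 + c) * Sv - c * Su) + W ^ q = c * A ^ q - (1 + c) * B ^ q + W ^ q := by
    linear_combination (1 + c) * hv' - c * hu'
  linarith [hgoal, hconv]
end
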